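/- (Recovering dR from its symmetrized form) If R is n×n upper triangular invertible, dR is upper triangular, and S := sym(dR R⁻¹), then dR = (S ∘ Eᵀ) R, where E is the masking matrix with e_{ij} = 0 for i < j, 1 for i = j, 2 for i > j. -/

import Mathlib

open Matrix

noncomputable def symm' {n : ℕ} (A : Matrix (Fin n) (Fin n) ℝ) : Matrix (Fin n) (Fin n) ℝ :=
  (1 / 2 : ℝ) • (A + Aᵀ)

def maskE (n : ℕ) : Matrix (Fin n) (Fin n) ℝ :=
  fun i j => if i < j then 0 else if i = j then 1 else 2

/-- Recovering dR from its symmetrized form: dR = (sym(dR R⁻¹) ∘ Eᵀ) R. -/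
theorem recover_dR (n : ℕ) (R dR : Matrix (Fin n) (Fin n) ℝ)
    (hR : ∀ i j : Fin n, j < i → R i j = 0) (hdR : ∀ i j : Fin n, j < i → dR i j = 0)
    (hinv : IsUnit R.det) :
    dR = Matrix.hadamard (symm' (dR * R⁻¹)) (maskE n)ᵀ * R := by
  haveI := R.invertibleOfIsUnitDet hinv
  have hRt : R.BlockTriangular id := fun i j h => hR i j h
  have hM : (dR * R⁻¹).BlockTriangular id :=
    (BlockTriangular.mul (fun i j h => hdR i j h)
      (blockTriangular_inv_of_blockTriangular hRt))
  have key : Matrix.hadamard (symm' (dR * R⁻¹)) (maskE n)ᵀ = dR * R⁻¹ := by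
    ext i j
    simp only [hadamard_apply, symm', maskE, transpose_apply, Matrix.smul_apply, Matrix.add_apply,
      smul_eq_mul]
    rcases lt_trichotomy i j with h | h | h
    · have hji : (dR * R⁻¹) j i = 0 := hM h
      rw [if_neg (not_lt.2 h.le), if_neg (Ne.symm h.ne), hji]
      ring
    · subst h
      simp
      ring
    · have hij : (dR * R⁻¹) i j = 0 := hM h
      rw [if_pos h, hij]
      ring
  rw [key, Matrix.mul_assoc, Matrix.nonsing_inv_mul R hinv, Matrix.mul_one]
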